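/- Let p ≥ 1 and let H be the p×p real matrix with H(i,j) = 2·1{i=j} − 1{|i−j|=1} − 1{i=j=p}. Then for every nonempty subset V ⊆ {1,...,p} with |V| = k, the principal submatrix H^{V,V} is symmetric positive definite and its smallest eigenvalue satisfies λ_min(H^{V,V}) ≥ 2/(k² + k). -/

import Mathlib

open Matrix

/-- The `p×p` matrix `H` with `H(i,j) = 2·1{i=j} − 1{|i−j|=1} − 1{i=j=p}` (1-indexed;
rows and columns indexed by `Fin p`, the last index corresponding to `p`). -/
noncomputable def hCP (p : ℕ) : Matrix (Fin p) (Fin p) ℝ :=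
  Matrix.of fun i j =>
    2 * (if i = j then 1 else 0) - (if |((i : ℕ) : ℤ) - ((j : ℕ) : ℤ)| = 1 then 1 else 0)
      - (if i = j ∧ (i : ℕ) = p - 1 then 1 else 0)

open Finset

namespace Stmt14Aux


/-- run length of the set `S` ending at `n`. -/
def rl (S : Finset ℕ) : ℕ → ℕ
  | 0 => if 0 ∈ S then 1 else 0
  | n+1 => if n+1 ∈ S then rl S n + 1 else 0

variable {S : Finset ℕ}

lemma rl_pos {n : ℕ} (h : n ∈ S) : 0 < rl S n := by
  cases n <;> simp [rl, h]

lemma mem_of_rl_pos {n : ℕ} (h : 0 < rl S n) : n ∈ S := by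
  by_contra hn
  cases n <;> simp [rl, hn] at h

lemma rl_le_succ (n : ℕ) : rl S n ≤ n + 1 := by
  induction n with
  | zero => unfold rl; split <;> omega
  | succ n ih => unfold rl; split <;> omega

lemma rl_run : ∀ t n, t < rl S n → (n - t) ∈ S ∧ rl S (n - t) = rl S n - t := by
  intro t
  induction t with
  | zero => intro n ht; exact ⟨mem_of_rl_pos ht, by simp⟩
  | succ t ih =>
    intro n ht
    obtain ⟨hm, he⟩ := ih n (by omega)
    have hle : rl S (n - t) ≤ (n - t) + 1 := rl_le_succ _
    have hs : n - t = (n - (t+1)) + 1 := by omega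
    rw [hs] at hm he
    rw [rl, if_pos hm] at he
    have hmem : (n - (t+1)) ∈ S := mem_of_rl_pos (by omega)
    exact ⟨hmem, by omega⟩

lemma rl_boundary : ∀ n, rl S n ≤ n → (n - rl S n) ∉ S := by
  intro n
  induction n with
  | zero =>
    intro h hm
    have h0 : rl S 0 = 0 := Nat.le_zero.mp h
    rw [h0] at hm
    simp only [Nat.sub_zero] at hm
    have := rl_pos hm
    omega
  | succ n ih =>
    intro h
    by_cases hm : n+1 ∈ S
    · have he : rl S (n+1) = rl S n + 1 := by rw [rl, if_pos hm]
      have h2 : n + 1 - rl S (n+1) = n - rl S n := by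
        have := rl_pos hm; omega
      rw [h2]
      exact ih (by omega)
    · have he : rl S (n+1) = 0 := by rw [rl, if_neg hm]
      rw [he]
      simpa using hm

lemma rl_le_card (n : ℕ) : rl S n ≤ S.card := by
  classical
  have hsub : (range (rl S n)).image (fun t => n - t) ⊆ S := by
    intro m hm
    simp only [mem_image, mem_range] at hm
    obtain ⟨t, ht, rfl⟩ := hm
    exact (rl_run t n ht).1
  have hinj : Set.InjOn (fun t => n - t) ↑(range (rl S n)) := by
    intro a ha b hb hab
    simp only [coe_range, Set.mem_Iio] at ha hb
    have hle := rl_le_succ (S := S) n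
    simp only at hab
    omega
  have hc := Finset.card_image_of_injOn hinj
  calc rl S n = ((range (rl S n)).image (fun t => n - t)).card := by rw [hc, card_range]
    _ ≤ S.card := Finset.card_le_card hsub

lemma telescope (Y : ℕ → ℝ) (hY : ∀ m, m ∉ S → Y m = 0) (n : ℕ) (hn : n ∈ S) :
    Y n = ∑ i ∈ Ico (n + 1 - rl S n) (n+1), (Y i - if i = 0 then 0 else Y (i-1)) := by
  set G : ℕ → ℝ := fun m => if m = 0 then 0 else Y (m-1) with hG
  have hD : ∀ i ∈ Ico (n + 1 - rl S n) (n+1),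
      (Y i - if i = 0 then 0 else Y (i-1)) = G (i+1) - G i := by
    intro i _; simp [hG]
  rw [Finset.sum_congr rfl hD]
  have hle : n + 1 - rl S n ≤ n + 1 := by omega
  rw [Finset.sum_Ico_eq_sub _ hle, Finset.sum_range_sub G, Finset.sum_range_sub G]
  have h1 : G (n+1) = Y n := by simp [hG]
  have hpos := rl_pos hn
  have h2 : G (n + 1 - rl S n) = 0 := by
    rcases Nat.eq_zero_or_pos (n + 1 - rl S n) with h | h
    · simp [hG, h]
    · have hrn : rl S n ≤ n := by have := rl_le_succ (S := S) n; omega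
      have he : n + 1 - rl S n - 1 = n - rl S n := by omega
      simp only [hG]
      rw [if_neg (by omega), he]
      exact hY _ (rl_boundary n hrn)
  rw [h1, h2]
  ring

lemma coeff_bound (i : ℕ) :
    2 * ∑ n ∈ S.filter (fun n => n + 1 - rl S n ≤ i ∧ i ≤ n), rl S n ≤ S.card * (S.card + 1) := by
  classical
  set T := S.filter (fun n => n + 1 - rl S n ≤ i ∧ i ≤ n) with hT
  have hmono : ∀ a ∈ T, ∀ b ∈ T, a < b → rl S a < rl S b := by
    intro a ha b hb hab
    rw [hT, mem_filter] at ha hb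
    have ht : b - a < rl S b := by omega
    obtain ⟨_, he⟩ := rl_run (b - a) b ht
    have hba : b - (b - a) = a := by omega
    rw [hba] at he
    have := rl_pos ha.1
    omega
  have hinj : Set.InjOn (rl S) ↑T := by
    intro a ha b hb hab
    simp only [Finset.mem_coe] at ha hb
    rcases lt_trichotomy a b with h | h | h
    · exact absurd hab (by have := hmono a ha b hb h; omega)
    · exact h
    · exact absurd hab (by have := hmono b hb a ha h; omega)
  have himg : T.image (rl S) ⊆ range (S.card + 1) := by
    intro m hm
    simp only [mem_image] at hm
    obtain ⟨n, hn, rfl⟩ := hm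
    have : rl S n ≤ S.card := rl_le_card n
    simp only [mem_range]; omega
  calc 2 * ∑ n ∈ T, rl S n = (∑ m ∈ T.image (rl S), m) * 2 := by
        rw [Finset.sum_image (fun a ha b hb hab => hinj ha hb hab)]; ring
    _ ≤ (∑ m ∈ range (S.card + 1), m) * 2 := by
        have := Finset.sum_le_sum_of_subset (f := id) himg
        simpa using Nat.mul_le_mul_right 2 this
    _ = S.card * (S.card + 1) := by
        rw [Finset.sum_range_id_mul_two]
        simp [Nat.mul_comm]

lemma key (p : ℕ) (Y : ℕ → ℝ) (hY : ∀ m, m ∉ S → Y m = 0) (hSp : ∀ n ∈ S, n < p) :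
    2 * ∑ n ∈ range p, (Y n)^2 ≤
      ((S.card : ℝ) * (S.card + 1)) *
        ∑ n ∈ range p, (Y n - if n = 0 then 0 else Y (n-1))^2 := by
  classical
  set D : ℕ → ℝ := fun n => Y n - if n = 0 then 0 else Y (n-1) with hD
  have h1 : ∑ n ∈ range p, (Y n)^2 = ∑ n ∈ S, (Y n)^2 := by
    rw [Finset.sum_subset (fun n hn => mem_range.mpr (hSp n hn))]
    intro m _ hm
    rw [hY m hm]; ring
  have h2 : ∀ n ∈ S, (Y n)^2 ≤ (rl S n : ℝ) * ∑ i ∈ Ico (n+1-rl S n) (n+1), (D i)^2 := by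
    intro n hn
    rw [telescope Y hY n hn]
    have hcs := Finset.sum_mul_sq_le_sq_mul_sq (Ico (n+1-rl S n) (n+1)) (fun _ => (1:ℝ)) D
    have hcard : ((Ico (n+1-rl S n) (n+1)).card : ℝ) = (rl S n : ℝ) := by
      rw [Nat.card_Ico]
      have := rl_le_succ (S := S) n
      congr 1
      omega
    calc (∑ i ∈ Ico (n+1-rl S n) (n+1), D i)^2
        = (∑ i ∈ Ico (n+1-rl S n) (n+1), (fun _ => (1:ℝ)) i * D i)^2 := by simp
      _ ≤ (∑ i ∈ Ico (n+1-rl S n) (n+1), ((fun _ => (1:ℝ)) i)^2) * ∑ i ∈ Ico (n+1-rl S n) (n+1), (D i)^2 := hcs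
      _ = (rl S n : ℝ) * ∑ i ∈ Ico (n+1-rl S n) (n+1), (D i)^2 := by
          simp only [one_pow, Finset.sum_const, nsmul_eq_mul, mul_one]
          rw [hcard]
  have h4 : ∀ n ∈ S, (rl S n : ℝ) * ∑ i ∈ Ico (n+1-rl S n) (n+1), (D i)^2
      = ∑ i ∈ range p, (if n+1-rl S n ≤ i ∧ i ≤ n then (rl S n : ℝ) * (D i)^2 else 0) := by
    intro n hn
    rw [Finset.sum_ite, Finset.sum_const_zero, add_zero, Finset.mul_sum]
    congr 1
    ext i
    simp only [Finset.mem_filter, Finset.mem_range, Finset.mem_Ico]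
    have := hSp n hn
    omega
  have h5 : ∀ i ∈ range p,
      2 * ∑ n ∈ S, (if n+1-rl S n ≤ i ∧ i ≤ n then (rl S n : ℝ) * (D i)^2 else 0)
        ≤ ((S.card : ℝ) * (S.card + 1)) * (D i)^2 := by
    intro i _
    have he : ∑ n ∈ S, (if n+1-rl S n ≤ i ∧ i ≤ n then (rl S n : ℝ) * (D i)^2 else 0)
        = (∑ n ∈ S.filter (fun n => n + 1 - rl S n ≤ i ∧ i ≤ n), (rl S n : ℝ)) * (D i)^2 := by
      rw [Finset.sum_ite, Finset.sum_const_zero, add_zero, Finset.sum_mul]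
    rw [he, ← mul_assoc]
    apply mul_le_mul_of_nonneg_right _ (sq_nonneg _)
    have hb := coeff_bound (S := S) i
    have hcast : (2:ℝ) * ∑ n ∈ S.filter (fun n => n + 1 - rl S n ≤ i ∧ i ≤ n), (rl S n : ℝ)
        = ((2 * ∑ n ∈ S.filter (fun n => n + 1 - rl S n ≤ i ∧ i ≤ n), rl S n : ℕ) : ℝ) := by
      push_cast
      ring
    rw [hcast]
    calc ((2 * ∑ n ∈ S.filter (fun n => n + 1 - rl S n ≤ i ∧ i ≤ n), rl S n : ℕ) : ℝ)
        ≤ ((S.card * (S.card + 1) : ℕ) : ℝ) := by exact_mod_cast Nat.cast_le.mpr hb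
      _ = (S.card : ℝ) * (S.card + 1) := by push_cast; ring
  calc 2 * ∑ n ∈ range p, (Y n)^2 = 2 * ∑ n ∈ S, (Y n)^2 := by rw [h1]
    _ ≤ 2 * ∑ n ∈ S, (rl S n : ℝ) * ∑ i ∈ Ico (n+1-rl S n) (n+1), (D i)^2 := by
        have := Finset.sum_le_sum h2
        linarith
    _ = 2 * ∑ n ∈ S, ∑ i ∈ range p, (if n+1-rl S n ≤ i ∧ i ≤ n then (rl S n : ℝ) * (D i)^2 else 0) := by
        rw [Finset.sum_congr rfl h4]
    _ = ∑ i ∈ range p, 2 * ∑ n ∈ S, (if n+1-rl S n ≤ i ∧ i ≤ n then (rl S n : ℝ) * (D i)^2 else 0) := by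
        rw [Finset.sum_comm, Finset.mul_sum]
    _ ≤ ∑ i ∈ range p, ((S.card : ℝ) * (S.card + 1)) * (D i)^2 := Finset.sum_le_sum h5
    _ = ((S.card : ℝ) * (S.card + 1)) * ∑ n ∈ range p, (D n)^2 := by rw [Finset.mul_sum]



/-- ℕ-indexed entry function of the matrix `hCP p`. -/
def Hn (p : ℕ) (m n : ℕ) : ℝ :=
  2 * (if m = n then 1 else 0) - (if |(m:ℤ) - (n:ℤ)| = 1 then 1 else 0)
    - (if m = n ∧ m = p - 1 then 1 else 0)

lemma quad_eq (q : ℕ) (Y : ℕ → ℝ) (h0 : ∀ n, q + 1 ≤ n → Y n = 0) :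
    ∑ m ∈ range (q+1), Y m * ∑ n ∈ range (q+1), Hn (q+1) m n * Y n
      = ∑ n ∈ range (q+1), (Y n - if n = 0 then 0 else Y (n-1))^2 := by
  classical
  have inner : ∀ m ∈ range (q+1), ∑ n ∈ range (q+1), Hn (q+1) m n * Y n
      = 2 * Y m - Y (m+1) - (if m = 0 then 0 else Y (m-1)) - (if m = q then Y m else 0) := by
    intro m hm
    have hsplit : ∀ n, Hn (q+1) m n * Y n
        = 2 * (if m = n then Y n else 0) - (if n = m + 1 then Y n else 0)
          - (if n + 1 = m then Y n else 0)
          - (if m = q then (if m = n then Y n else 0) else 0) := by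
      intro n
      have habs : (|(m:ℤ) - (n:ℤ)| = 1) ↔ (n = m + 1 ∨ n + 1 = m) := by
        rw [abs_eq (by norm_num : (0:ℤ) ≤ 1)]
        omega
      have hconj : (m = n ∧ m = (q+1) - 1) ↔ (m = n ∧ m = q) := by omega
      unfold Hn
      rw [if_congr habs rfl rfl, if_congr hconj rfl rfl]
      split_ifs <;> first | ring1 | (exfalso; omega)
    rw [Finset.sum_congr rfl (fun n _ => hsplit n)]
    rw [Finset.sum_sub_distrib, Finset.sum_sub_distrib, Finset.sum_sub_distrib, ← Finset.mul_sum]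
    have e1 : ∑ n ∈ range (q+1), (if m = n then Y n else 0) = Y m := by
      rw [Finset.sum_ite_eq]
      exact if_pos hm
    have e2 : ∑ n ∈ range (q+1), (if n = m + 1 then Y n else 0) = Y (m+1) := by
      rw [Finset.sum_ite_eq']
      split_ifs with h
      · rfl
      · rw [h0 (m+1) (by simp only [mem_range] at h; omega)]
    have e3 : ∑ n ∈ range (q+1), (if n + 1 = m then Y n else 0)
        = (if m = 0 then 0 else Y (m-1)) := by
      rcases m with _ | m'
      · simp
      · have : ∀ n, (if n + 1 = m' + 1 then Y n else 0) = (if n = m' then Y n else 0) := by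
          intro n
          apply if_congr _ rfl rfl
          omega
        rw [Finset.sum_congr rfl (fun n _ => this n), Finset.sum_ite_eq']
        rw [if_pos (mem_range.mpr (by simp only [mem_range] at hm; omega))]
        simp
    have e4 : ∑ n ∈ range (q+1), (if m = q then (if m = n then Y n else 0) else 0)
        = (if m = q then Y m else 0) := by
      by_cases h : m = q
      · simp only [if_pos h]
        exact e1
      · simp [h]
    rw [e1, e2, e3, e4]
  have inner' : ∀ m ∈ range (q+1), Y m * ∑ n ∈ range (q+1), Hn (q+1) m n * Y n
      = Y m * (2 * Y m - Y (m+1) - (if m = 0 then 0 else Y (m-1)) - (if m = q then Y m else 0)) :=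
    fun m hm => by rw [inner m hm]
  rw [Finset.sum_congr rfl inner']
  have expand : ∀ m, Y m * (2 * Y m - Y (m+1) - (if m = 0 then 0 else Y (m-1)) - (if m = q then Y m else 0))
      = 2 * (Y m)^2 - Y m * Y (m+1) - Y m * (if m = 0 then 0 else Y (m-1))
        - (if m = q then (Y m)^2 else 0) := by
    intro m
    split_ifs <;> ring
  rw [Finset.sum_congr rfl (fun m _ => expand m)]
  rw [Finset.sum_sub_distrib, Finset.sum_sub_distrib, Finset.sum_sub_distrib, ← Finset.mul_sum]
  have hBC : ∑ m ∈ range (q+1), Y m * Y (m+1)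
      = ∑ m ∈ range (q+1), Y m * (if m = 0 then 0 else Y (m-1)) := by
    rw [Finset.sum_range_succ, h0 (q+1) (by omega), Finset.sum_range_succ' _ q]
    simp [mul_comm]
  have hq2 : ∑ m ∈ range (q+1), (if m = q then (Y m)^2 else 0) = (Y q)^2 := by
    rw [Finset.sum_ite_eq']
    exact if_pos (mem_range.mpr (by omega))
  have hRexp : ∀ n, (Y n - if n = 0 then 0 else Y (n-1))^2
      = (Y n)^2 - 2 * (Y n * (if n = 0 then 0 else Y (n-1))) + (if n = 0 then 0 else Y (n-1))^2 := by
    intro n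
    split_ifs <;> ring
  rw [Finset.sum_congr rfl (fun n _ => hRexp n)]
  rw [Finset.sum_add_distrib, Finset.sum_sub_distrib, ← Finset.mul_sum]
  have hprev : ∑ n ∈ range (q+1), (if n = 0 then 0 else Y (n-1))^2
      = ∑ n ∈ range (q+1), (Y n)^2 - (Y q)^2 := by
    rw [Finset.sum_range_succ' _ q]
    simp only [Nat.add_sub_cancel, if_neg (Nat.succ_ne_zero _)]
    rw [Finset.sum_range_succ (fun n => (Y n)^2) q]
    simp
  rw [hq2, hprev, ← hBC]
  ring

end Stmt14Aux

lemma hCP_entry (p : ℕ) (i j : Fin p) : hCP p i j = Stmt14Aux.Hn p (i : ℕ) (j : ℕ) := by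
  simp only [hCP, Stmt14Aux.Hn, Matrix.of_apply]
  have h1 : (i = j) ↔ ((i:ℕ) = (j:ℕ)) := Fin.val_inj.symm
  have h2 : (i = j ∧ (i:ℕ) = p - 1) ↔ ((i:ℕ) = (j:ℕ) ∧ (i:ℕ) = p - 1) := and_congr h1 Iff.rfl
  rw [if_congr h1 rfl rfl, if_congr h2 rfl rfl]

lemma hCP_symm (p : ℕ) (i j : Fin p) : hCP p j i = hCP p i j := by
  rw [hCP_entry, hCP_entry]
  simp only [Stmt14Aux.Hn]
  have h1 : ((j:ℕ) = (i:ℕ)) ↔ ((i:ℕ) = (j:ℕ)) := eq_comm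
  have h2 : |((j:ℕ):ℤ) - ((i:ℕ):ℤ)| = 1 ↔ |((i:ℕ):ℤ) - ((j:ℕ):ℤ)| = 1 := by rw [abs_sub_comm]
  have h3 : ((j:ℕ) = (i:ℕ) ∧ (j:ℕ) = p - 1) ↔ ((i:ℕ) = (j:ℕ) ∧ (i:ℕ) = p - 1) := by
    constructor <;> rintro ⟨h, h'⟩ <;> exact ⟨h.symm, h ▸ h'⟩
  rw [if_congr h1 rfl rfl, if_congr h2 rfl rfl, if_congr h3 rfl rfl]

/-- For every nonempty `V ⊆ {1,...,p}` with `|V| = k`, the principal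
submatrix `H^{V,V}` is symmetric positive definite and its smallest eigenvalue is at least
`2/(k² + k)`; equivalently, `x' H^{V,V} x ≥ (2/(k²+k)) ‖x‖²` for all `x`. -/
theorem stmt_14 (p : ℕ) (hp : 1 ≤ p) (V : Finset (Fin p)) (hV : V.Nonempty) :
    ((hCP p).submatrix (fun i : V => (i : Fin p)) (fun j : V => (j : Fin p))).PosDef ∧
    ∀ x : V → ℝ,
      (2 / ((V.card : ℝ) ^ 2 + (V.card : ℝ))) * ∑ i, x i ^ 2 ≤
        x ⬝ᵥ ((hCP p).submatrix (fun i : V => (i : Fin p)) (fun j : V => (j : Fin p)) *ᵥ x) := by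
  classical
  obtain ⟨q, rfl⟩ : ∃ q, p = q + 1 := ⟨p - 1, by omega⟩
  set M := (hCP (q+1)).submatrix (fun i : V => (i : Fin (q+1))) (fun j : V => (j : Fin (q+1)))
    with hM
  set S : Finset ℕ := V.image (fun i : Fin (q+1) => (i : ℕ)) with hS
  have hcard : S.card = V.card := Finset.card_image_of_injective V Fin.val_injective
  have hSp : ∀ n ∈ S, n < q + 1 := by
    intro n hn
    rw [hS, Finset.mem_image] at hn
    obtain ⟨i, _, rfl⟩ := hn
    exact i.isLt
  have hkpos : (0:ℝ) < (V.card : ℝ) := by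
    exact_mod_cast Finset.card_pos.mpr hV
  -- the main per-vector inequality
  have main : ∀ x : ↥V → ℝ,
      2 * ∑ i, x i ^ 2 ≤ ((V.card : ℝ) * ((V.card : ℝ) + 1)) * (x ⬝ᵥ (M *ᵥ x)) := by
    intro x
    set y : Fin (q+1) → ℝ := fun i => if h : i ∈ V then x ⟨i, h⟩ else 0 with hy
    set Y : ℕ → ℝ := fun n => if h : n < q + 1 then y ⟨n, h⟩ else 0 with hY
    have hYv : ∀ i : Fin (q+1), Y (i : ℕ) = y i := by
      intro i
      simp only [hY]
      rw [dif_pos i.isLt]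
    have hY0 : ∀ m, m ∉ S → Y m = 0 := by
      intro m hm
      simp only [hY]
      split_ifs with h
      · simp only [hy]
        rw [dif_neg]
        intro hv
        exact hm (by rw [hS]; exact Finset.mem_image.mpr ⟨⟨m, h⟩, hv, rfl⟩)
      · rfl
    have hYbig : ∀ n, q + 1 ≤ n → Y n = 0 := by
      intro n hn
      simp only [hY]
      rw [dif_neg (by omega)]
    have hyx : ∀ j : ↥V, y (j : Fin (q+1)) = x j := by
      intro j
      simp only [hy]
      rw [dif_pos j.2]
    -- quadratic form identity
    have e1 : ∀ i : Fin (q+1),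
        ∑ j : ↥V, hCP (q+1) i (j : Fin (q+1)) * x j
          = ∑ j : Fin (q+1), hCP (q+1) i j * y j := by
      intro i
      calc ∑ j : ↥V, hCP (q+1) i (j : Fin (q+1)) * x j
          = ∑ j ∈ V.attach, hCP (q+1) i (j : Fin (q+1)) * y (j : Fin (q+1)) := by
            rw [Finset.univ_eq_attach]
            exact Finset.sum_congr rfl (fun j _ => by rw [hyx j])
        _ = ∑ j ∈ V, hCP (q+1) i j * y j :=
            Finset.sum_attach V (fun j => hCP (q+1) i j * y j)
        _ = ∑ j : Fin (q+1), hCP (q+1) i j * y j :=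
            Finset.sum_subset (Finset.subset_univ V)
              (fun j _ hj => by simp only [hy]; rw [dif_neg hj]; ring)
    have hQ : x ⬝ᵥ (M *ᵥ x)
        = ∑ m ∈ range (q+1), Y m * ∑ n ∈ range (q+1), Stmt14Aux.Hn (q+1) m n * Y n := by
      calc x ⬝ᵥ (M *ᵥ x)
          = ∑ i : ↥V, x i * ∑ j : ↥V, hCP (q+1) (i : Fin (q+1)) (j : Fin (q+1)) * x j := by
            simp only [dotProduct, Matrix.mulVec, hM, Matrix.submatrix_apply]
        _ = ∑ i : ↥V, y (i : Fin (q+1)) * ∑ j : Fin (q+1), hCP (q+1) (i : Fin (q+1)) j * y j := by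
            exact Finset.sum_congr rfl (fun i _ => by rw [e1, hyx i])
        _ = ∑ i ∈ V, y i * ∑ j : Fin (q+1), hCP (q+1) i j * y j := by
            rw [Finset.univ_eq_attach]
            exact Finset.sum_attach V (fun i => y i * ∑ j : Fin (q+1), hCP (q+1) i j * y j)
        _ = ∑ i : Fin (q+1), y i * ∑ j : Fin (q+1), hCP (q+1) i j * y j :=
            Finset.sum_subset (Finset.subset_univ V)
              (fun i _ hi => by simp only [hy]; rw [dif_neg hi]; ring)
        _ = ∑ i : Fin (q+1), Y (i : ℕ) * ∑ j : Fin (q+1), Stmt14Aux.Hn (q+1) (i:ℕ) (j:ℕ) * Y (j:ℕ) := by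
            refine Finset.sum_congr rfl (fun i _ => ?_)
            rw [hYv i]
            congr 1
            exact Finset.sum_congr rfl (fun j _ => by rw [hYv j, hCP_entry])
        _ = ∑ m ∈ range (q+1), Y m * ∑ n ∈ range (q+1), Stmt14Aux.Hn (q+1) m n * Y n := by
            rw [← Fin.sum_univ_eq_sum_range
              (fun m => Y m * ∑ n ∈ range (q+1), Stmt14Aux.Hn (q+1) m n * Y n) (q+1)]
            refine Finset.sum_congr rfl (fun i _ => ?_)
            congr 1
            exact Fin.sum_univ_eq_sum_range (fun n => Stmt14Aux.Hn (q+1) (i:ℕ) n * Y n) (q+1)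
    have hX : ∑ i, x i ^ 2 = ∑ n ∈ range (q+1), (Y n)^2 := by
      calc ∑ i : ↥V, x i ^ 2
          = ∑ i ∈ V.attach, y (i : Fin (q+1)) ^ 2 := by
            rw [Finset.univ_eq_attach]
            exact Finset.sum_congr rfl (fun i _ => by rw [hyx i])
        _ = ∑ i ∈ V, y i ^ 2 := Finset.sum_attach V (fun i => y i ^ 2)
        _ = ∑ i : Fin (q+1), y i ^ 2 :=
            Finset.sum_subset (Finset.subset_univ V)
              (fun i _ hi => by simp only [hy]; rw [dif_neg hi]; ring)
        _ = ∑ i : Fin (q+1), Y (i : ℕ) ^ 2 := Finset.sum_congr rfl (fun i _ => by rw [hYv i])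
        _ = ∑ n ∈ range (q+1), (Y n)^2 := Fin.sum_univ_eq_sum_range (fun n => (Y n)^2) (q+1)
    have hkey := Stmt14Aux.key (S := S) (q+1) Y hY0 hSp
    rw [hcard] at hkey
    rw [hX, hQ, Stmt14Aux.quad_eq q Y hYbig]
    exact hkey
  have hKpos : (0:ℝ) < (V.card : ℝ) * ((V.card : ℝ) + 1) := by nlinarith
  constructor
  · rw [Matrix.posDef_iff_dotProduct_mulVec]
    constructor
    · -- Hermitian
      ext i j
      simp only [Matrix.conjTranspose_apply, hM, Matrix.submatrix_apply, star_trivial]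
      exact hCP_symm (q+1) _ _
    · intro x hx
      obtain ⟨i0, hi0⟩ := Function.ne_iff.mp hx
      have hi0' : x i0 ≠ 0 := by simpa using hi0
      have hx0 : 0 < x i0 ^ 2 := by
        rcases lt_or_gt_of_ne hi0' with h | h <;> nlinarith
      have hsum : 0 < ∑ i, x i ^ 2 :=
        Finset.sum_pos' (fun i _ => sq_nonneg _) ⟨i0, Finset.mem_univ _, hx0⟩
      have hm := main x
      have hstar : star x = x := funext fun i => star_trivial _
      rw [hstar]
      show (0:ℝ) < x ⬝ᵥ (M *ᵥ x)
      nlinarith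
  · intro x
    have hkk : (0:ℝ) < (V.card : ℝ)^2 + (V.card : ℝ) := by nlinarith
    rw [div_mul_eq_mul_div, div_le_iff₀ hkk]
    have hm := main x
    nlinarith
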